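/- There exists a constant C such that for every n ≥ 2 and every (x_1,…,x_n) ∈ A_n satisfying x_1 = n, one has S_n(x_1,…,x_n) ≤ n³ + C·n². (Indeed, x_1 = x_2 ∈ {n−1, n} forces x_3 ≤ 3 via the constraint x_1 + x_2 + x_3 ≤ 2n + 2.) -/

import Mathlib

/-- `S n x = Σ_{1 ≤ i < j ≤ n} x_i · x_j²` (sequences indexed from 1). -/
def Spoly (n : ℕ) (x : ℕ → ℤ) : ℤ :=
  ∑ i ∈ Finset.Icc 1 n, ∑ j ∈ Finset.Icc 1 n, if i < j then x i * x j ^ 2 else 0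

/-- Membership in `A_n`: integer sequences `(x_1, …, x_n)` with
`n ≥ x_1 ≥ x_2 ≥ ⋯ ≥ x_n ≥ 0`, `Σ_{i=1}^k x_i ≤ 2n + 6k − 16` for every
`k ∈ {1, …, n}`, and `Σ_{i=1}^n x_i ≤ 6n − 12`. -/
def memA (n : ℕ) (x : ℕ → ℤ) : Prop :=
  x 1 ≤ (n : ℤ) ∧
  (∀ i, 1 ≤ i → i < n → x (i + 1) ≤ x i) ∧
  (0 ≤ x n) ∧
  (∀ k, 1 ≤ k → k ≤ n → ∑ i ∈ Finset.Icc 1 k, x i ≤ 2 * (n : ℤ) + 6 * (k : ℤ) - 16) ∧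
  (∑ i ∈ Finset.Icc 1 n, x i ≤ 6 * (n : ℤ) - 12)

set_option maxHeartbeats 2000000 in
private lemma final_ineq (N G a b R : ℤ) (hN : 3 ≤ N) (ha0 : 0 ≤ a) (haN : a ≤ N)
    (hG : G = N + 2 - a) (hb0 : 0 ≤ b) (hba : b ≤ a) (hbG : b ≤ G)
    (hR0 : 0 ≤ R) (hRb : R ≤ G + 6*N - 18) :
    N * a ^ 2 + 2*N * (G * b + 6 * G + 36 * N)
      + (18 * G * R + N * (108 * (G + 6*N))) ≤ N ^ 3 + 2000 * N ^ 2 := by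
  have hN0 : (0:ℤ) ≤ N := by linarith
  have hG0 : (0:ℤ) ≤ G := by linarith
  have hGN : G ≤ N + 2 := by linarith
  nlinarith [mul_nonneg (mul_nonneg hN0 hG0) (sub_nonneg.2 hba),
    mul_nonneg (mul_nonneg hN0 hG0) (sub_nonneg.2 hbG),
    mul_nonneg (mul_nonneg hN0 hG0) (sub_nonneg.2 hGN),
    mul_nonneg (mul_nonneg hN0 hG0) ha0,
    mul_nonneg hG0 (sub_nonneg.2 hRb),
    mul_nonneg (sub_nonneg.2 hGN) hR0,
    mul_nonneg hN0 (sub_nonneg.2 hRb),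
    mul_nonneg hN0 (sub_nonneg.2 hGN),
    mul_nonneg (sub_nonneg.2 hGN) hG0,
    mul_nonneg (sub_nonneg.2 hGN) (by linarith : (0:ℤ) ≤ N + 2)]

set_option maxHeartbeats 2000000 in
/-- There is a constant `C` such that for every `n ≥ 2` and every `(x_1,…,x_n) ∈ A_n`
with `x_1 = n`, one has `S_n(x) ≤ n³ + C·n²`. -/
theorem stmt_14 :
    ∃ C : ℤ, ∀ n : ℕ, 2 ≤ n → ∀ x : ℕ → ℤ, memA n x → x 1 = (n : ℤ) →
      Spoly n x ≤ (n : ℤ) ^ 3 + C * (n : ℤ) ^ 2 := by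
  use 2000
  intro n hn x hA hx1
  obtain ⟨hx1n, hmono, hlast, hpart, htot⟩ := hA
  -- monotonicity
  have mono : ∀ i j : ℕ, 1 ≤ i → i ≤ j → j ≤ n → x j ≤ x i := by
    intro i j hi
    induction j with
    | zero => intro hij _; exact absurd (hi.trans hij) (by omega)
    | succ m ih =>
      intro hij hjn
      rcases eq_or_lt_of_le hij with rfl | h
      · exact le_rfl
      · exact (hmono m (by omega) (by omega)).trans (ih (by omega) (by omega))
  have nonneg : ∀ i, 1 ≤ i → i ≤ n → 0 ≤ x i := by
    intro i h1 h2
    exact hlast.trans (mono i n h1 h2 le_rfl)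
  -- rewrite Spoly
  have hS : Spoly n x = ∑ j ∈ Finset.Icc 1 n, (∑ i ∈ Finset.Icc 1 (j-1), x i) * x j ^ 2 := by
    unfold Spoly
    rw [Finset.sum_comm]
    refine Finset.sum_congr rfl fun j hj => ?_
    rw [Finset.mem_Icc] at hj
    rw [← Finset.sum_filter]
    have hf : Finset.filter (fun i => i < j) (Finset.Icc 1 n) = Finset.Icc 1 (j-1) := by
      ext i
      simp only [Finset.mem_filter, Finset.mem_Icc]
      omega
    rw [hf, ← Finset.sum_mul]
  have hins : Finset.Icc 1 n = insert 1 (insert 2 (Finset.Icc 3 n)) := by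
    ext i; simp only [Finset.mem_insert, Finset.mem_Icc]; omega
  have hkey : Spoly n x = (n:ℤ) * x 2 ^ 2 +
      ∑ j ∈ Finset.Icc 3 n, (∑ i ∈ Finset.Icc 1 (j-1), x i) * x j ^ 2 := by
    rw [hS, hins, Finset.sum_insert (by simp [Finset.mem_Icc]),
        Finset.sum_insert (by simp [Finset.mem_Icc])]
    have e1 : (∑ i ∈ Finset.Icc 1 (1-1), x i) * x 1 ^ 2 = 0 := by
      norm_num
    have e2 : (∑ i ∈ Finset.Icc 1 (2-1), x i) * x 2 ^ 2 = (n:ℤ) * x 2 ^ 2 := by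
      norm_num [hx1]
    rw [e1, e2]; ring
  set G : ℤ := (n:ℤ) + 2 - x 2 with hGdef
  -- partial sums from index 3
  have hR : ∀ k, 3 ≤ k → k ≤ n → (∑ i ∈ Finset.Icc 3 k, x i) ≤ G + 6*(k:ℤ) - 18 := by
    intro k h3 hk
    have hp := hpart k (by omega) hk
    have hik : Finset.Icc 1 k = insert 1 (insert 2 (Finset.Icc 3 k)) := by
      ext i; simp only [Finset.mem_insert, Finset.mem_Icc]; omega
    rw [hik, Finset.sum_insert (by simp [Finset.mem_Icc]),
        Finset.sum_insert (by simp [Finset.mem_Icc]), hx1] at hp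
    rw [hGdef]; linarith
  have hcnt : ∀ k, 3 ≤ k → k ≤ n → ((k:ℤ) - 2) * x k ≤ ∑ i ∈ Finset.Icc 3 k, x i := by
    intro k h3 hk
    have hb : (Finset.Icc 3 k).card • x k ≤ ∑ i ∈ Finset.Icc 3 k, x i := by
      refine Finset.card_nsmul_le_sum _ _ _ fun i hi => ?_
      rw [Finset.mem_Icc] at hi
      exact mono i k (by omega) hi.2 hk
    have hc : ((Finset.Icc 3 k).card : ℤ) = (k:ℤ) - 2 := by
      rw [Nat.card_Icc]; omega
    rw [nsmul_eq_mul, hc] at hb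
    exact hb
  by_cases h3n : 3 ≤ n
  case neg =>
    -- n = 2
    have hn2 : n = 2 := by omega
    have hemp : Finset.Icc 3 n = ∅ := by rw [hn2]; decide
    rw [hkey, hemp, Finset.sum_empty, add_zero]
    have h20 : 0 ≤ x 2 := nonneg 2 (by omega) (by omega)
    have h2n : x 2 ≤ (n:ℤ) := hx1 ▸ mono 1 2 le_rfl (by omega) (by omega)
    have hn' : (2:ℤ) ≤ (n:ℤ) := by exact_mod_cast hn
    nlinarith [sq_nonneg (x 2), mul_nonneg h20 h20]
  case pos =>
  have hx30 : 0 ≤ x 3 := nonneg 3 (by omega) h3n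
  have hx20 : 0 ≤ x 2 := nonneg 2 (by omega) (by omega)
  have hx2n : x 2 ≤ (n:ℤ) := hx1 ▸ mono 1 2 le_rfl (by omega) (by omega)
  have hx32 : x 3 ≤ x 2 := mono 2 3 (by omega) (by omega) h3n
  have hx3G : x 3 ≤ G := by
    have h := hR 3 le_rfl h3n
    rw [Finset.Icc_self, Finset.sum_singleton] at h
    push_cast at h
    linarith
  -- Abel-type lemma
  have lemA : ∀ m, 3 ≤ m → m ≤ n →
      ∑ j ∈ Finset.Icc 3 m, x j ^ 2 ≤
        (∑ i ∈ Finset.Icc 3 m, x i) * x m + G * x 3 - G * x m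
          + 6 * (∑ i ∈ Finset.Icc 3 m, x i) - 6 * x 3 - 6 * ((m:ℤ) - 3) * x m := by
    intro m hm3
    induction m, hm3 using Nat.le_induction with
    | base =>
      intro _
      simp [Finset.Icc_self]
      nlinarith [sq_nonneg (x 3)]
    | succ m hm ih =>
      intro hmn
      have ihm := ih (by omega)
      rw [Finset.sum_Icc_succ_top (by omega : 3 ≤ m + 1),
          Finset.sum_Icc_succ_top (by omega : 3 ≤ m + 1)]
      have hx : x (m+1) ≤ x m := hmono m (by omega) (by omega)
      have hRm : (∑ i ∈ Finset.Icc 3 m, x i) ≤ G + 6*(m:ℤ) - 18 := hR m hm (by omega)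
      push_cast
      nlinarith [ihm, mul_nonneg (sub_nonneg.2 hx) (sub_nonneg.2 hRm)]
  have hRn : (∑ i ∈ Finset.Icc 3 n, x i) ≤ G + 6*(n:ℤ) - 18 := hR n h3n le_rfl
  have hRn0 : 0 ≤ ∑ i ∈ Finset.Icc 3 n, x i := by
    refine Finset.sum_nonneg fun i hi => ?_
    rw [Finset.mem_Icc] at hi
    exact nonneg i (by omega) hi.2
  have hQA : ∑ j ∈ Finset.Icc 3 n, x j ^ 2 ≤ G * x 3 + 6 * G + 36 * (n:ℤ) := by
    have hl := lemA n h3n le_rfl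
    have hxn0 : 0 ≤ x n := hlast
    have h3Z : (3:ℤ) ≤ (n:ℤ) := by exact_mod_cast h3n
    nlinarith [hl, mul_nonneg hxn0 (sub_nonneg.2 hRn),
      mul_nonneg hxn0 (by linarith : (0:ℤ) ≤ 6 * ((n:ℤ) - 3))]
  -- bound on Σ 6 j x_j^2
  have hQB : ∑ j ∈ Finset.Icc 3 n, 6*(j:ℤ) * x j ^ 2 ≤
      18 * G * (∑ j ∈ Finset.Icc 3 n, x j) + (n:ℤ) * (108 * (G + 6*(n:ℤ))) := by
    have hstep : ∑ j ∈ Finset.Icc 3 n, 6*(j:ℤ) * x j ^ 2 ≤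
        ∑ j ∈ Finset.Icc 3 n, (18 * G * x j + 108 * (G + 6*(n:ℤ))) := by
      refine Finset.sum_le_sum fun j hj => ?_
      rw [Finset.mem_Icc] at hj
      have h1 : ((j:ℤ) - 2) * x j ≤ G + 6*(j:ℤ) - 18 :=
        (hcnt j hj.1 hj.2).trans (hR j hj.1 hj.2)
      have h2 : 0 ≤ x j := nonneg j (by omega) hj.2
      have h3 : (j:ℤ) ≤ (n:ℤ) := by exact_mod_cast hj.2
      have h4 : (3:ℤ) ≤ (j:ℤ) := by exact_mod_cast hj.1
      nlinarith [mul_le_mul_of_nonneg_left h1 (by positivity : (0:ℤ) ≤ 18 * x j),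
        sq_nonneg (x j), mul_nonneg h2 (by linarith : (0:ℤ) ≤ (j:ℤ) - 3),
        mul_nonneg (sq_nonneg (x j)) (by linarith : (0:ℤ) ≤ (j:ℤ) - 3)]
    have heq : ∑ j ∈ Finset.Icc 3 n, (18 * G * x j + 108 * (G + 6*(n:ℤ)))
        = 18 * G * (∑ j ∈ Finset.Icc 3 n, x j)
          + ((Finset.Icc 3 n).card : ℤ) * (108 * (G + 6*(n:ℤ))) := by
      rw [Finset.sum_add_distrib, ← Finset.mul_sum, Finset.sum_const, nsmul_eq_mul]
    have hcard : ((Finset.Icc 3 n).card : ℤ) ≤ (n:ℤ) := by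
      rw [Nat.card_Icc]; omega
    have hn0' : (0:ℤ) ≤ (n:ℤ) := Int.natCast_nonneg n
    have hGn0 : 0 ≤ 108 * (G + 6*(n:ℤ)) := by
      rw [hGdef]; linarith
    calc ∑ j ∈ Finset.Icc 3 n, 6*(j:ℤ) * x j ^ 2
        ≤ 18 * G * (∑ j ∈ Finset.Icc 3 n, x j)
          + ((Finset.Icc 3 n).card : ℤ) * (108 * (G + 6*(n:ℤ))) := by
          rw [← heq]; exact hstep
      _ ≤ 18 * G * (∑ j ∈ Finset.Icc 3 n, x j) + (n:ℤ) * (108 * (G + 6*(n:ℤ))) := by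
          have := mul_le_mul_of_nonneg_right hcard hGn0
          linarith
  -- per-term bound for tail of S
  have htail : ∑ j ∈ Finset.Icc 3 n, (∑ i ∈ Finset.Icc 1 (j-1), x i) * x j ^ 2 ≤
      ∑ j ∈ Finset.Icc 3 n, (2*(n:ℤ) * x j ^ 2 + 6*(j:ℤ) * x j ^ 2) := by
    refine Finset.sum_le_sum fun j hj => ?_
    rw [Finset.mem_Icc] at hj
    have hp := hpart (j-1) (by omega) (by omega)
    have hcast : (((j:ℕ)-1 : ℕ) : ℤ) = (j:ℤ) - 1 := by omega
    rw [hcast] at hp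
    have hsq : (0:ℤ) ≤ x j ^ 2 := sq_nonneg _
    calc (∑ i ∈ Finset.Icc 1 (j-1), x i) * x j ^ 2
        ≤ (2*(n:ℤ) + 6*((j:ℤ)-1) - 16) * x j ^ 2 := mul_le_mul_of_nonneg_right hp hsq
      _ ≤ 2*(n:ℤ) * x j ^ 2 + 6*(j:ℤ) * x j ^ 2 := by nlinarith [hsq]
  have hsum2 : ∑ j ∈ Finset.Icc 3 n, (2*(n:ℤ) * x j ^ 2 + 6*(j:ℤ) * x j ^ 2)
      = 2*(n:ℤ) * (∑ j ∈ Finset.Icc 3 n, x j ^ 2)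
        + ∑ j ∈ Finset.Icc 3 n, 6*(j:ℤ) * x j ^ 2 := by
    rw [Finset.sum_add_distrib, ← Finset.mul_sum]
  -- final assembly
  rw [hkey]
  have hnZ : (3:ℤ) ≤ (n:ℤ) := by exact_mod_cast h3n
  have hn0 : (0:ℤ) ≤ (n:ℤ) := by linarith
  have hG0 : (0:ℤ) ≤ G := by rw [hGdef]; linarith
  have hG1 : G ≤ (n:ℤ) + 2 := by rw [hGdef]; linarith
  have hx2G : x 2 = (n:ℤ) + 2 - G := by rw [hGdef]; ring
  have hchain : ∑ j ∈ Finset.Icc 3 n, (∑ i ∈ Finset.Icc 1 (j-1), x i) * x j ^ 2 ≤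
      2*(n:ℤ) * (G * x 3 + 6 * G + 36 * (n:ℤ))
        + (18 * G * (∑ j ∈ Finset.Icc 3 n, x j) + (n:ℤ) * (108 * (G + 6*(n:ℤ)))) := by
    calc ∑ j ∈ Finset.Icc 3 n, (∑ i ∈ Finset.Icc 1 (j-1), x i) * x j ^ 2
        ≤ 2*(n:ℤ) * (∑ j ∈ Finset.Icc 3 n, x j ^ 2)
          + ∑ j ∈ Finset.Icc 3 n, 6*(j:ℤ) * x j ^ 2 := by rw [← hsum2]; exact htail
      _ ≤ _ := by
          have h2n0 : (0:ℤ) ≤ 2*(n:ℤ) := by linarith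
          linarith [mul_le_mul_of_nonneg_left hQA h2n0, hQB]
  have hfin := final_ineq (n:ℤ) G (x 2) (x 3) (∑ j ∈ Finset.Icc 3 n, x j)
    hnZ hx20 hx2n hGdef hx30 hx32 hx3G hRn0 hRn
  linarith [hchain, hfin]
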